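/- arXiv:1701.02109 — 5 statements merged into one kernel-verified Lean document; each statement's English description precedes it below -/
import Mathlib

section
/- For every i ∈ [n], the noncrossing partition x_i whose unique non-singleton block is {1, 2, ..., i-1} ∪ {n} is a left-modular element of the noncrossing partition lattice (NC_n, ≤_dref); that is, for all y ≤ z in NC_n, (y ∨ x_i) ∧ z = y ∨ (x_i ∧ z). -/
/-- A set partition of `[n]` (as a setoid on `Fin n`) is noncrossing. -/
def IsNoncrossing {n : ℕ} (x : Setoid (Fin n)) : Prop :=
  ∀ i j k l : Fin n, i < j → j < k → k < l → x.r i k → x.r j l → x.r i j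

/-- `B` is a block of the set partition `x`. -/
def IsBlock {n : ℕ} (x : Setoid (Fin n)) (B : Set (Fin n)) : Prop :=
  ∃ a, B = {b | x.r a b}

/-- The set partition whose unique (possibly) non-singleton block is `S`. -/
def blockSetoid {n : ℕ} (S : Set (Fin n)) : Setoid (Fin n) where
  r a b := a = b ∨ (a ∈ S ∧ b ∈ S)
  iseqv := by
    refine ⟨fun _ => Or.inl rfl, ?_, ?_⟩
    · rintro a b (rfl | ⟨h1, h2⟩)
      · exact Or.inl rfl
      · exact Or.inr ⟨h2, h1⟩
    · rintro a b c (rfl | ⟨h1, h2⟩) h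
      · exact h
      · rcases h with rfl | ⟨h3, h4⟩
        · exact Or.inr ⟨h1, h2⟩
        · exact Or.inr ⟨h1, h4⟩

/-- The element `x_i` of the left-modular chain: its unique non-singleton block is
`[i-1] ∪ {n}` (in 1-based terms), i.e. the elements with value `< i-1` or value `n-1`. -/
def xChain (n i : ℕ) : Setoid (Fin n) :=
  blockSetoid {a : Fin n | a.val + 1 < i ∨ a.val = n - 1}

/-- The noncrossing closure: the smallest noncrossing partition above `x`. -/
def ncClosure {n : ℕ} (x : Setoid (Fin n)) : Setoid (Fin n) :=
  sInf {y | IsNoncrossing y ∧ x ≤ y}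

/-- The join of two noncrossing partitions in `NC_n`. -/
def joinNC {n : ℕ} (x y : Setoid (Fin n)) : Setoid (Fin n) :=
  ncClosure (x ⊔ y)

/-- The join of a set of noncrossing partitions in `NC_n`. -/
def joinSetNC {n : ℕ} (X : Set (Setoid (Fin n))) : Setoid (Fin n) :=
  ncClosure (sSup X)

/-- Membership in `PE_n`: noncrossing, `{n-1, n}` is not a block, and it is not the case
that `{n}` is a singleton block while `1 ∼ n-1`. -/
def PEmem {n : ℕ} (x : Setoid (Fin n)) : Prop :=
  IsNoncrossing x ∧
  ¬ IsBlock x {a : Fin n | a.val = n - 2 ∨ a.val = n - 1} ∧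
  ¬ (IsBlock x {a : Fin n | a.val = n - 1} ∧
      ∃ a b : Fin n, a.val = 0 ∧ b.val = n - 2 ∧ x.r a b)

/-- `m` is the meet of `x` and `y` in the poset `PE_n`. -/
def IsMeetPE {n : ℕ} (x y m : Setoid (Fin n)) : Prop :=
  PEmem m ∧ m ≤ x ∧ m ≤ y ∧ ∀ z, PEmem z → z ≤ x → z ≤ y → z ≤ m

/-- `j` is the join of `x` and `y` in the poset `PE_n`. -/
def IsJoinPE {n : ℕ} (x y j : Setoid (Fin n)) : Prop :=
  PEmem j ∧ x ≤ j ∧ y ≤ j ∧ ∀ z, PEmem z → x ≤ z → y ≤ z → j ≤ z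

/-- `x ⋖ y` in `PE_n`. -/
def CovPE {n : ℕ} (x y : Setoid (Fin n)) : Prop :=
  PEmem x ∧ PEmem y ∧ x < y ∧ ∀ z, PEmem z → x < z → ¬ z < y

/-- The atoms of `NC_n`: partitions `a_{i,j}` with unique non-singleton block `{i, j}`. -/
def IsAtomNC {n : ℕ} (a : Setoid (Fin n)) : Prop :=
  ∃ i j : Fin n, i < j ∧ a = blockSetoid {i, j}

/-- The partial order `≼` on atoms of `NC_n` induced by the classes
`A_j = {a : a ≤ x_j and a ≰ x_{j-1}}`. -/
def atomPrec {n : ℕ} (a b : Setoid (Fin n)) : Prop :=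
  ∃ i j : ℕ, 1 ≤ i ∧ i < j ∧ j ≤ n - 1 ∧
    (a ≤ xChain n i ∧ ¬ a ≤ xChain n (i - 1)) ∧
    (b ≤ xChain n j ∧ ¬ b ≤ xChain n (j - 1))

/-- A set of atoms of `NC_n` is bounded below (BB). -/
def IsBBset {n : ℕ} (X : Set (Setoid (Fin n))) : Prop :=
  ∀ d ∈ X, ∃ a, IsAtomNC a ∧ atomPrec a d ∧ a < joinSetNC X

/-- A set of atoms of `NC_n` is NBB: no nonempty subset is bounded below. -/
def IsNBBset {n : ℕ} (X : Set (Setoid (Fin n))) : Prop :=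
  ∀ Y ⊆ X, Y.Nonempty → ¬ IsBBset Y

/-- `X` is an NBB base for the top element of `NC_n`. -/
def IsNBBBaseTop {n : ℕ} (X : Set (Setoid (Fin n))) : Prop :=
  (∀ a ∈ X, IsAtomNC a) ∧ IsNBBset X ∧ joinSetNC X = ⊤

/-- The graph `τ(X)` on vertex set `[n]` associated with a set `X` of atoms:
`i` and `j` are adjacent iff `a_{i,j} ∈ X`. -/
def atomGraph {n : ℕ} (X : Set (Setoid (Fin n))) : SimpleGraph (Fin n) where
  Adj i j := i ≠ j ∧ blockSetoid ({i, j} : Set (Fin n)) ∈ X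
  symm := ⟨by
    rintro i j ⟨hne, hm⟩
    exact ⟨hne.symm, by rwa [Set.pair_comm]⟩⟩
  loopless := ⟨fun i h => h.1 rfl⟩

/-- The parking label of the cover `x ⋖ y` is `p`: `y` merges blocks `B₁, B₂` of `x` with
`min B₁ < min B₂`, and `p = max { j ∈ B₁ : j ≤ i for all i ∈ B₂ }`. -/
def ParkingLabelIs {n : ℕ} (x y : Setoid (Fin n)) (p : Fin n) : Prop :=
  ∃ B₁ B₂ : Set (Fin n), IsBlock x B₁ ∧ IsBlock x B₂ ∧ B₁ ≠ B₂ ∧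
    IsBlock y (B₁ ∪ B₂) ∧
    (∃ a ∈ B₁, ∀ b ∈ B₂, a < b) ∧
    p ∈ B₁ ∧ (∀ i ∈ B₂, p ≤ i) ∧ (∀ j ∈ B₁, (∀ i ∈ B₂, j ≤ i) → j ≤ p)

/-- The label of the cover `w ⋖ z` in the `S_n` EL-labeling of `PE_n` coming from the
left-modular chain: `λ(w,z) = min { i-1 : x_i ≰ w and x_i ≤ z }`. -/
def LabelIs (n : ℕ) (w z : Setoid (Fin n)) (v : ℕ) : Prop :=
  ∃ i : ℕ, 1 ≤ i ∧ i ≤ n ∧ i - 1 = v ∧ (¬ xChain n i ≤ w ∧ xChain n i ≤ z) ∧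
    ∀ j : ℕ, 1 ≤ j → j ≤ n → (¬ xChain n j ≤ w ∧ xChain n j ≤ z) → i ≤ j

/-- The sequence of edge labels along a (saturated) chain, recorded as a list. -/
def chainLabels {α Λ : Type*} (lab : α → α → Λ) (c : List α) : List Λ :=
  List.zipWith lab c c.tail

/-- `c` is a saturated chain from `a` to `b` with respect to the cover relation `cov`. -/
def IsSatChainList {α : Type*} (cov : α → α → Prop) (a b : α) (c : List α) : Prop :=
  c.head? = some a ∧ c.getLast? = some b ∧ c.Chain' cov

/-- A chain is rising if its label sequence is strictly increasing. -/
def RisingChain {α Λ : Type*} [LT Λ] (lab : α → α → Λ) (c : List α) : Prop :=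
  (chainLabels lab c).Chain' (· < ·)

/-- `lab` is an EL-labeling with respect to the cover relation `cov` and order `le`:
every interval has a unique rising maximal chain, which is lexicographically least. -/
def IsELLabeling {α Λ : Type*} [PartialOrder Λ] (cov : α → α → Prop) (le : α → α → Prop)
    (lab : α → α → Λ) : Prop :=
  ∀ a b, le a b → ∃ c : List α, IsSatChainList cov a b c ∧ RisingChain lab c ∧
    (∀ c', IsSatChainList cov a b c' → RisingChain lab c' → c' = c) ∧
    (∀ c', IsSatChainList cov a b c' → c' ≠ c →
      List.Lex (· < ·) (chainLabels lab c) (chainLabels lab c'))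

-- aux
lemma ncClosure_le {n : ℕ} {s t : Setoid (Fin n)} (ht : IsNoncrossing t) (hst : s ≤ t) :
    ncClosure s ≤ t := sInf_le ⟨ht, hst⟩

lemma le_ncClosure {n : ℕ} (s : Setoid (Fin n)) : s ≤ ncClosure s :=
  le_sInf fun _ h => h.2

def bigBlock {n : ℕ} (y : Setoid (Fin n)) (S : Set (Fin n)) : Set (Fin n) :=
  {u | ∃ s ∈ S, y.r u s}

def Jset {n : ℕ} (y : Setoid (Fin n)) (S : Set (Fin n)) : Setoid (Fin n) where
  r a b := y.r a b ∨ (a ∈ bigBlock y S ∧ b ∈ bigBlock y S)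
  iseqv := by
    refine ⟨fun a => Or.inl (y.refl a), ?_, ?_⟩
    · rintro a b (h | ⟨h1, h2⟩)
      · exact Or.inl (y.symm h)
      · exact Or.inr ⟨h2, h1⟩
    · rintro a b c (h | ⟨h1, h2⟩) (h' | ⟨h3, h4⟩)
      · exact Or.inl (y.trans h h')
      · refine Or.inr ⟨?_, h4⟩
        obtain ⟨s, hs, hbs⟩ := h3
        exact ⟨s, hs, y.trans h hbs⟩
      · refine Or.inr ⟨h1, ?_⟩
        obtain ⟨s, hs, hbs⟩ := h2
        exact ⟨s, hs, y.trans (y.symm h') hbs⟩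
      · exact Or.inr ⟨h1, h4⟩

lemma sup_block_eq {n : ℕ} (y : Setoid (Fin n)) (S : Set (Fin n)) :
    y ⊔ blockSetoid S = Jset y S := by
  apply le_antisymm
  · apply sup_le
    · intro a b h
      exact Or.inl h
    · rintro a b (rfl | ⟨ha, hb⟩)
      · exact Or.inl (y.refl a)
      · exact Or.inr ⟨⟨a, ha, y.refl a⟩, ⟨b, hb, y.refl b⟩⟩
  · rintro a b (h | ⟨⟨s, hs, has⟩, ⟨t, ht, hbt⟩⟩)
    · exact (le_sup_left : y ≤ y ⊔ blockSetoid S) h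
    · refine (y ⊔ blockSetoid S).trans ((le_sup_left : y ≤ _) has) ?_
      refine (y ⊔ blockSetoid S).trans ((le_sup_right : blockSetoid S ≤ _) (Or.inr ⟨hs, ht⟩)) ?_
      exact (le_sup_left : y ≤ _) (y.symm hbt)

lemma J_noncrossing (n i : ℕ) (y : Setoid (Fin n)) (hy : IsNoncrossing y) :
    IsNoncrossing (Jset y {a : Fin n | a.val + 1 < i ∨ a.val = n - 1}) := by
  set S : Set (Fin n) := {a | a.val + 1 < i ∨ a.val = n - 1} with hS
  have hSB : ∀ a : Fin n, a ∈ S → a ∈ bigBlock y S := fun a ha => ⟨a, ha, y.refl a⟩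
  have hBcl : ∀ a b : Fin n, y.r a b → b ∈ bigBlock y S → a ∈ bigBlock y S := by
    rintro a b hab ⟨s, hs, hbs⟩; exact ⟨s, hs, y.trans hab hbs⟩
  rintro a b c d hab hbc hcd (h1 | ⟨haB, hcB⟩) (h2 | ⟨hbB, hdB⟩)
  · exact Or.inl (hy a b c d hab hbc hcd h1 h2)
  · -- y a c, b ∈ B, d ∈ B
    by_cases haB : a ∈ bigBlock y S
    · exact Or.inr ⟨haB, hbB⟩
    · obtain ⟨s, hs, hbs⟩ := hbB
      rcases hs with hs | hs
      · -- s.val + 1 < i, show s < a and derive contradiction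
        have haS : a ∉ S := fun h => haB (hSB a h)
        have ha' : ¬ (a.val + 1 < i) := fun h => haS (Or.inl h)
        have hsa : s < a := by
          rw [Fin.lt_def]; omega
        have := hy s a b c hsa hab hbc (y.symm hbs) h1
        exact absurd ⟨s, Or.inl hs, y.symm this⟩ haB
      · -- s.val = n - 1
        have hcB' : c ∉ bigBlock y S := fun h => haB (hBcl a c h1 h)
        have hc' : c.val ≠ n - 1 := fun h => hcB' (hSB c (Or.inr h))
        have hcs : c < s := by
          rw [Fin.lt_def]; have := c.isLt; omega
        exact Or.inl (hy a b c s hab hbc hcs h1 hbs)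
  · -- a ∈ B, c ∈ B, y b d
    by_cases hbB : b ∈ bigBlock y S
    · exact Or.inr ⟨haB, hbB⟩
    · obtain ⟨t, ht, hct⟩ := hcB
      rcases ht with ht | ht
      · have hbS : b ∉ S := fun h => hbB (hSB b h)
        have hb' : ¬ (b.val + 1 < i) := fun h => hbS (Or.inl h)
        have htb : t < b := by rw [Fin.lt_def]; omega
        have := hy t b c d htb hbc hcd (y.symm hct) h2
        exact absurd ⟨t, Or.inl ht, y.symm this⟩ hbB
      · have hd' : d.val ≠ n - 1 := by
          intro h
          exact hbB ⟨d, Or.inr h, h2⟩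
        have hdt : d < t := by rw [Fin.lt_def]; have := d.isLt; omega
        have := hy b c d t hbc hcd hdt h2 hct
        exact absurd ⟨t, Or.inr ht, y.trans this hct⟩ hbB
  · exact Or.inr ⟨haB, hbB⟩

/-- For `i ∈ [n]`, the noncrossing partition `x_i` with unique non-singleton
block `[i-1] ∪ {n}` is left-modular in `(NC_n, ≤_dref)`: for all noncrossing `y ≤ z`,
`(y ∨ x_i) ∧ z = y ∨ (x_i ∧ z)` (meets in `NC_n` being common refinements, joins
noncrossing closures of partition-lattice joins). -/
theorem xChain_leftModular_NC (n i : ℕ) (h1 : 1 ≤ i) (h2 : i ≤ n)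
    (y z : Setoid (Fin n)) (hy : IsNoncrossing y) (hz : IsNoncrossing z) (hyz : y ≤ z) :
    joinNC y (xChain n i) ⊓ z = joinNC y (xChain n i ⊓ z) := by
  have hnc : IsNoncrossing (y ⊔ xChain n i) := by
    rw [xChain, sup_block_eq]
    exact J_noncrossing n i y hy
  have hsup : joinNC y (xChain n i) = y ⊔ xChain n i :=
    le_antisymm (ncClosure_le hnc le_rfl) (le_ncClosure _)
  apply le_antisymm
  · rw [hsup]
    intro a b hab
    obtain ⟨hJ, hzab⟩ : (y ⊔ xChain n i).r a b ∧ z.r a b := hab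
    rw [xChain, sup_block_eq] at hJ
    rcases hJ with h | ⟨⟨s, hs, has⟩, ⟨t, ht, hbt⟩⟩
    · exact le_ncClosure _ ((le_sup_left : y ≤ y ⊔ (xChain n i ⊓ z)) h)
    · have hzst : z.r s t := z.trans (z.symm (hyz has)) (z.trans hzab (hyz hbt))
      have hxst : (xChain n i).r s t := Or.inr ⟨hs, ht⟩
      have hmst : (xChain n i ⊓ z).r s t := ⟨hxst, hzst⟩
      refine le_ncClosure _ ?_
      refine (y ⊔ (xChain n i ⊓ z)).trans ((le_sup_left : y ≤ _) has) ?_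
      refine (y ⊔ (xChain n i ⊓ z)).trans ((le_sup_right : xChain n i ⊓ z ≤ _) hmst) ?_
      exact (le_sup_left : y ≤ _) (y.symm hbt)
  · refine le_inf ?_ ?_
    · rw [hsup]
      exact ncClosure_le hnc (sup_le le_sup_left (le_trans inf_le_left le_sup_right))
    · exact ncClosure_le hz (sup_le hyz inf_le_right)
end

section
/- For n ≥ 1, the noncrossing partition lattice (NC_n, ≤_dref) is a supersolvable lattice, with M-chain given by 0̂ = x_1 < x_2 < ... < x_n = 1̂, where x_i has unique non-singleton block [i-1] ∪ {n}. -/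
set_option linter.deprecated false

namespace NCaux
variable {n : ℕ}

lemma block_rel {S : Set (Fin n)} {a b : Fin n} :
    (blockSetoid S).r a b ↔ a = b ∨ (a ∈ S ∧ b ∈ S) := Iff.rfl

lemma le_iff {r s : Setoid (Fin n)} : r ≤ s ↔ ∀ a b, r.r a b → s.r a b := by
  rw [Setoid.le_def]

lemma block_mono {S T : Set (Fin n)} (h : S ⊆ T) : blockSetoid S ≤ blockSetoid T := by
  rw [le_iff]
  rintro a b (rfl | ⟨h1, h2⟩)
  · exact Or.inl rfl
  · exact Or.inr ⟨h h1, h h2⟩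

lemma nc_block (S : Set (Fin n)) : IsNoncrossing (blockSetoid S) := by
  rintro i j k l hij hjk hkl (rfl | ⟨h1, h2⟩) (rfl | ⟨h3, h4⟩)
  · exact absurd (hij.trans hjk) (lt_irrefl _)
  · exact absurd (hij.trans hjk) (lt_irrefl _)
  · exact absurd (hjk.trans hkl) (lt_irrefl _)
  · exact Or.inr ⟨h1, h3⟩

lemma nc_inf {x z : Setoid (Fin n)} (hx : IsNoncrossing x) (hz : IsNoncrossing z) :
    IsNoncrossing (x ⊓ z) := by
  rintro i j k l hij hjk hkl ⟨h1, h2⟩ ⟨h3, h4⟩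
  exact ⟨hx i j k l hij hjk hkl h1 h3, hz i j k l hij hjk hkl h2 h4⟩

/-- Characterization of join with a one-block partition. -/
lemma sup_block_rel (y : Setoid (Fin n)) (S : Set (Fin n)) (a b : Fin n) :
    (y ⊔ blockSetoid S).r a b ↔
      y.r a b ∨ ((∃ s ∈ S, y.r a s) ∧ ∃ t ∈ S, y.r b t) := by
  set R : Setoid (Fin n) :=
    { r := fun a b => y.r a b ∨ ((∃ s ∈ S, y.r a s) ∧ ∃ t ∈ S, y.r b t)
      iseqv := by
        refine ⟨fun a => Or.inl (y.refl a), ?_, ?_⟩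
        · rintro a b (h | ⟨h1, h2⟩)
          · exact Or.inl (y.symm h)
          · exact Or.inr ⟨h2, h1⟩
        · rintro a b c (h | ⟨h1, h2⟩) (h' | ⟨h3, h4⟩)
          · exact Or.inl (y.trans h h')
          · exact Or.inr ⟨⟨h3.choose, h3.choose_spec.1, y.trans h h3.choose_spec.2⟩, h4⟩
          · exact Or.inr ⟨h1, ⟨h2.choose, h2.choose_spec.1, y.trans (y.symm h') h2.choose_spec.2⟩⟩
          · exact Or.inr ⟨h1, h4⟩ } with hR
  have hEq : y ⊔ blockSetoid S = R := by
    apply le_antisymm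
    · apply sup_le
      · rw [le_iff]; exact fun a b h => Or.inl h
      · rw [le_iff]
        rintro a b (rfl | ⟨h1, h2⟩)
        · exact Or.inl (y.refl a)
        · exact Or.inr ⟨⟨a, h1, y.refl a⟩, ⟨b, h2, y.refl b⟩⟩
    · rw [le_iff]
      rintro a b (h | ⟨⟨s, hs, has⟩, ⟨t, ht, hbt⟩⟩)
      · exact Setoid.le_def.mp le_sup_left h
      · refine (y ⊔ blockSetoid S).trans (Setoid.le_def.mp le_sup_left has) ?_
        refine (y ⊔ blockSetoid S).trans
          (Setoid.le_def.mp (le_sup_right (a := y)) (Or.inr ⟨hs, ht⟩ :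
            (blockSetoid S).r s t)) ?_
        exact Setoid.le_def.mp le_sup_left (y.symm hbt)
  rw [hEq]; rfl

/-- Left modularity in the full partition lattice. -/
lemma leftmod (S : Set (Fin n)) {y z : Setoid (Fin n)} (hyz : y ≤ z) :
    (y ⊔ blockSetoid S) ⊓ z = y ⊔ (blockSetoid S ⊓ z) := by
  apply le_antisymm
  · rw [le_iff]
    rintro a b ⟨h1, h2⟩
    rcases (sup_block_rel y S a b).mp h1 with h | ⟨⟨s, hs, has⟩, ⟨t, ht, hbt⟩⟩
    · exact Setoid.le_def.mp le_sup_left h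
    · have hzst : z.r s t :=
        z.trans (z.symm (Setoid.le_def.mp hyz has)) (z.trans h2 (Setoid.le_def.mp hyz hbt))
    
      have hst : (blockSetoid S ⊓ z).r s t := ⟨Or.inr ⟨hs, ht⟩, hzst⟩
      refine (y ⊔ (blockSetoid S ⊓ z)).trans (Setoid.le_def.mp le_sup_left has) ?_
      refine (y ⊔ (blockSetoid S ⊓ z)).trans (Setoid.le_def.mp (le_sup_right (a := y)) hst) ?_
      exact Setoid.le_def.mp le_sup_left (y.symm hbt)
  · exact sup_le (le_inf le_sup_left hyz) (le_inf (inf_le_left.trans le_sup_right) inf_le_right)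

end NCaux

namespace NCaux
variable {n : ℕ}

lemma nc_sup_xchain {y : Setoid (Fin n)} (hy : IsNoncrossing y) (i : ℕ) :
    IsNoncrossing (y ⊔ xChain n i) := by
  set S : Set (Fin n) := {a : Fin n | a.val + 1 < i ∨ a.val = n - 1} with hS
  have hSd : ∀ v : Fin n, v ∈ S ↔ v.val + 1 < i ∨ v.val = n - 1 := fun v => Iff.rfl
  intro a b c d hab hbc hcd h1 h2
  rw [Fin.lt_def] at hab hbc hcd
  apply (sup_block_rel y S a b).mpr
  rcases (sup_block_rel y S a c).mp h1 with h1 | ⟨⟨sa, hsa, hasa⟩, ⟨sc, hsc, hcsc⟩⟩ <;>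
    rcases (sup_block_rel y S b d).mp h2 with h2 | ⟨⟨sb, hsb, hbsb⟩, ⟨sd, hsd, hdsd⟩⟩
  · exact Or.inl (hy a b c d (Fin.lt_def.mpr hab) (Fin.lt_def.mpr hbc) (Fin.lt_def.mpr hcd) h1 h2)
  · -- case 2 : y a c, b ~ S, d ~ S
    by_cases haS : a ∈ S
    · exact Or.inr ⟨⟨a, haS, y.refl a⟩, ⟨sb, hsb, hbsb⟩⟩
    · rcases (hSd sb).mp hsb with hlt | htop
      · have h1' : ¬ (a.val + 1 < i ∨ a.val = n - 1) := haS
        have hsba : sb < a := by rw [Fin.lt_def]; omega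
        have := hy sb a b c hsba (Fin.lt_def.mpr hab) (Fin.lt_def.mpr hbc) (y.symm hbsb) h1
        exact Or.inr ⟨⟨sb, hsb, y.symm this⟩, ⟨sb, hsb, hbsb⟩⟩
      · by_cases hc : c.val = n - 1
        · have : c = sb := Fin.ext (by omega)
          exact Or.inr ⟨⟨sb, hsb, this ▸ h1⟩, ⟨sb, hsb, hbsb⟩⟩
        · have hcn : c.val < n - 1 := by have := c.isLt; omega
          have hcsb : c < sb := by rw [Fin.lt_def]; omega
          exact Or.inl (hy a b c sb (Fin.lt_def.mpr hab) (Fin.lt_def.mpr hbc) hcsb h1 hbsb)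
  · -- case 3 : a ~ S, c ~ S, y b d
    refine Or.inr ⟨⟨sa, hsa, hasa⟩, ?_⟩
    by_cases hbS : b ∈ S
    · exact ⟨b, hbS, y.refl b⟩
    · rcases (hSd sc).mp hsc with hlt | htop
      · have h1' : ¬ (b.val + 1 < i ∨ b.val = n - 1) := hbS
        have hscb : sc < b := by rw [Fin.lt_def]; omega
        exact ⟨sc, hsc, y.symm (hy sc b c d hscb (Fin.lt_def.mpr hbc) (Fin.lt_def.mpr hcd)
          (y.symm hcsc) h2)⟩
      · by_cases hd : d.val = n - 1
        · exact ⟨d, (hSd d).mpr (Or.inr hd), h2⟩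
        · have hdsc : d < sc := by rw [Fin.lt_def]; have := d.isLt; omega
          have hbc' := hy b c d sc (Fin.lt_def.mpr hbc) (Fin.lt_def.mpr hcd) hdsc h2 hcsc
          exact ⟨sc, hsc, y.trans hbc' hcsc⟩
  · exact Or.inr ⟨⟨sa, hsa, hasa⟩, ⟨sb, hsb, hbsb⟩⟩

lemma ncClosure_eq {u : Setoid (Fin n)} (hu : IsNoncrossing u) : ncClosure u = u :=
  le_antisymm (sInf_le ⟨hu, le_refl u⟩) (le_sInf fun _ hy => hy.2)

end NCaux

namespace NCaux
variable {n : ℕ}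

lemma xchain_le {i j : ℕ} (h : i ≤ j) : xChain n i ≤ xChain n j := by
  apply block_mono
  rintro a (ha | ha)
  · exact Or.inl (by omega)
  · exact Or.inr ha

lemma xchain_bot (hn : 1 ≤ n) : xChain n 1 = (⊥ : Setoid (Fin n)) := by
  apply le_antisymm _ bot_le
  rw [le_iff]
  rintro a b (rfl | ⟨h1, h2⟩)
  · exact (⊥ : Setoid (Fin n)).refl a
  · have h1' : a.val + 1 < 1 ∨ a.val = n - 1 := h1
    have h2' : b.val + 1 < 1 ∨ b.val = n - 1 := h2
    have : a = b := Fin.ext (by omega)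
    exact this ▸ (⊥ : Setoid (Fin n)).refl a

lemma xchain_top (hn : 1 ≤ n) : xChain n n = (⊤ : Setoid (Fin n)) := by
  apply le_antisymm le_top
  rw [le_iff]
  intro a b _
  have ha := a.isLt; have hb := b.isLt
  exact Or.inr ⟨(by omega : a.val + 1 < n ∨ a.val = n - 1),
    (by omega : b.val + 1 < n ∨ b.val = n - 1)⟩

lemma xchain_lt {i j : ℕ} (h1 : 1 ≤ i) (hij : i < j) (hjn : j ≤ n) :
    xChain n i < xChain n j := by
  refine lt_of_le_of_ne (xchain_le (le_of_lt hij)) (fun he => ?_)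
  have hi1 : i - 1 < n := by omega
  have hn1 : n - 1 < n := by omega
  have hrel : (xChain n j).r ⟨i - 1, hi1⟩ ⟨n - 1, hn1⟩ :=
    Or.inr ⟨Or.inl (by simp only; omega), Or.inr rfl⟩
  rw [← he] at hrel
  rcases hrel with h | ⟨ha, _⟩
  · have := Fin.mk.injEq (i-1) hi1 (n-1) hn1 ▸ h
    have h' : i - 1 = n - 1 := by exact_mod_cast Fin.mk.inj_iff.mp h
    omega
  · have ha' : (i - 1) + 1 < i ∨ (i - 1) = n - 1 := ha
    omega

lemma sandwich {k : ℕ} (hk : 1 ≤ k) (hkn : k + 1 ≤ n) {w : Setoid (Fin n)}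
    (hlo : xChain n k ≤ w) (hhi : w ≤ xChain n (k + 1)) :
    w = xChain n k ∨ w = xChain n (k + 1) := by
  by_cases hle : w ≤ xChain n k
  · exact Or.inl (le_antisymm hle hlo)
  right
  have hex : ∃ a b, w.r a b ∧ ¬ (xChain n k).r a b := by
    by_contra hc
    push_neg at hc
    exact hle (le_iff.mpr fun a b h => hc a b h)
  obtain ⟨a, b, hwab, hnab⟩ := hex
  have hkey : ∀ a b : Fin n, w.r a b → a.val = k - 1 →
      (b.val + 1 < k ∨ b.val = n - 1) → w = xChain n (k + 1) := by
    intro a b hwab ha hbSk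
    refine le_antisymm hhi (le_iff.mpr ?_)
    rintro u v (rfl | ⟨huS, hvS⟩)
    · exact w.refl u
    · have key : ∀ u : Fin n, (u.val + 1 < k + 1 ∨ u.val = n - 1) → w.r u b := by
        intro u hu
        by_cases hu' : u.val + 1 < k ∨ u.val = n - 1
        · exact le_iff.mp hlo u b (Or.inr ⟨hu', hbSk⟩)
        · have : u = a := Fin.ext (by omega)
          exact this ▸ hwab
      exact w.trans (key u huS) (w.symm (key v hvS))
  rcases le_iff.mp hhi a b hwab with rfl | ⟨haS, hbS⟩
  · exact absurd (Or.inl rfl) hnab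
  have hne : a ≠ b := fun h => hnab (Or.inl h)
  have hnS : ¬ ((a.val + 1 < k ∨ a.val = n - 1) ∧ (b.val + 1 < k ∨ b.val = n - 1)) :=
    fun h => hnab (Or.inr h)
  have haS' : a.val + 1 < k + 1 ∨ a.val = n - 1 := haS
  have hbS' : b.val + 1 < k + 1 ∨ b.val = n - 1 := hbS
  by_cases haSk : a.val + 1 < k ∨ a.val = n - 1
  · by_cases hbSk : b.val + 1 < k ∨ b.val = n - 1
    · exact absurd ⟨haSk, hbSk⟩ hnS
    · exact hkey b a (w.symm hwab) (by omega) haSk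
  · by_cases hbSk : b.val + 1 < k ∨ b.val = n - 1
    · exact hkey a b hwab (by omega) hbSk
    · exact absurd (Fin.ext (by omega : a.val = b.val)) hne

end NCaux


/-- For `n ≥ 1`, the noncrossing partition lattice `(NC_n, ≤_dref)` is a
supersolvable lattice with M-chain `0̂ = x_1 < x_2 < ... < x_n = 1̂`: the elements `x_i`
are noncrossing, form a maximal chain of `NC_n` from the discrete partition to the full
partition, and every `x_i` is left-modular. -/
theorem NC_supersolvable (n : ℕ) (hn : 1 ≤ n) :
    (∀ i, 1 ≤ i → i ≤ n → IsNoncrossing (xChain n i)) ∧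
    xChain n 1 = ⊥ ∧ xChain n n = ⊤ ∧
    (∀ i j, 1 ≤ i → i < j → j ≤ n → xChain n i < xChain n j) ∧
    IsMaxChain (fun a b : {s : Setoid (Fin n) // IsNoncrossing s} => a.val ≤ b.val)
      {x : {s : Setoid (Fin n) // IsNoncrossing s} | ∃ i, 1 ≤ i ∧ i ≤ n ∧ x.val = xChain n i} ∧
    (∀ i, 1 ≤ i → i ≤ n → ∀ y z : Setoid (Fin n), IsNoncrossing y → IsNoncrossing z →
      y ≤ z → joinNC y (xChain n i) ⊓ z = joinNC y (xChain n i ⊓ z)) := by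
  classical
  refine ⟨fun i _ _ => NCaux.nc_block _, NCaux.xchain_bot hn, NCaux.xchain_top hn,
    fun i j h1 h2 h3 => NCaux.xchain_lt h1 h2 h3, ⟨?_, ?_⟩, ?_⟩
  · -- chain
    rintro ⟨x, hx⟩ ⟨i, h1i, hin, hxe⟩ ⟨y', hy'⟩ ⟨j, h1j, hjn, hye⟩ hne
    simp only at hxe hye ⊢
    rcases le_total i j with h | h
    · exact Or.inl (by rw [hxe, hye]; exact NCaux.xchain_le h)
    · exact Or.inr (by rw [hye, hxe]; exact NCaux.xchain_le h)
  · -- maximality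
    intro t ht hst
    apply Set.Subset.antisymm hst
    intro z hzt
    by_contra hzs
    simp only [Set.mem_setOf_eq, not_exists, not_and] at hzs
    have comp : ∀ i, 1 ≤ i → i ≤ n → z.val ≤ xChain n i ∨ xChain n i ≤ z.val := by
      intro i hi hin
      have hmem : (⟨xChain n i, NCaux.nc_block _⟩ : {s : Setoid (Fin n) // IsNoncrossing s}) ∈
          {x : {s : Setoid (Fin n) // IsNoncrossing s} | ∃ i', 1 ≤ i' ∧ i' ≤ n ∧
            x.val = xChain n i'} := ⟨i, hi, hin, rfl⟩
      exact ht hzt (hst hmem) (fun h => hzs i hi hin (congrArg Subtype.val h))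
    have hP : ∃ m, z.val ≤ xChain n (m + 1) := by
      refine ⟨n - 1, ?_⟩
      have h : n - 1 + 1 = n := by omega
      rw [h, NCaux.xchain_top hn]
      exact le_top
    have hk : z.val ≤ xChain n (Nat.find hP + 1) := Nat.find_spec hP
    set k := Nat.find hP with hkdef
    have hkn : k ≤ n - 1 := Nat.find_min' hP (by
      have h : n - 1 + 1 = n := by omega
      rw [h, NCaux.xchain_top hn]; exact le_top)
    rcases Nat.eq_zero_or_pos k with h0 | hpos
    · have hb : z.val ≤ xChain n 1 := by
        have hb' := hk
        rw [h0] at hb'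
        exact hb'
      have hz1 : z.val = xChain n 1 := by
        rw [NCaux.xchain_bot hn] at hb ⊢
        exact le_bot_iff.mp hb
      exact hzs 1 le_rfl hn hz1
    · have hnk : ¬ z.val ≤ xChain n (k - 1 + 1) := Nat.find_min hP (by omega)
      have hlo' : ¬ z.val ≤ xChain n k := by
        have h : k - 1 + 1 = k := by omega
        rwa [h] at hnk
      rcases comp k hpos (by omega) with h | h
      · exact hlo' h
      · rcases NCaux.sandwich hpos (by omega) h hk with he | he
        · exact hlo' (he ▸ le_rfl)
        · exact hzs (k + 1) (by omega) (by omega) he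
  · -- left modularity
    intro i _ _ y z hy hz hyz
    have hB : IsNoncrossing (y ⊔ xChain n i) := NCaux.nc_sup_xchain hy i
    have e1 : joinNC y (xChain n i) = y ⊔ xChain n i := NCaux.ncClosure_eq hB
    have e2 : (y ⊔ xChain n i) ⊓ z = y ⊔ (xChain n i ⊓ z) :=
      NCaux.leftmod {a : Fin n | a.val + 1 < i ∨ a.val = n - 1} hyz
    have e3 : joinNC y (xChain n i ⊓ z) = y ⊔ (xChain n i ⊓ z) :=
      NCaux.ncClosure_eq (e2 ▸ NCaux.nc_inf hB hz)
    rw [e1, e3]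
    exact e2
end

section
/- For n ≥ 3, the subposet (PE_n, ≤_dref) of the noncrossing partition lattice is a lattice: every pair of elements of PE_n has a least upper bound and a greatest lower bound within PE_n. -/
section AuxPE

set_option linter.deprecated false

variable {n : ℕ}

/-- Split the element `c` off into its own singleton block. -/
def splitOff {α : Type*} (m : Setoid α) (c : α) : Setoid α where
  r a b := m a b ∧ (a = c ↔ b = c)
  iseqv := by
    refine ⟨fun a => ⟨m.refl' a, Iff.rfl⟩, ?_, ?_⟩
    · rintro a b ⟨h1, h2⟩; exact ⟨m.symm' h1, h2.symm⟩
    · rintro a b c ⟨h1, h2⟩ ⟨h3, h4⟩; exact ⟨m.trans' h1 h3, h2.trans h4⟩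

/-- Merge the blocks of `u` and `v`. -/
def mergeTwo {α : Type*} (m : Setoid α) (u v : α) : Setoid α where
  r a b := m a b ∨ ((m a u ∨ m a v) ∧ (m b u ∨ m b v))
  iseqv := by
    refine ⟨fun a => Or.inl (m.refl' a), ?_, ?_⟩
    · rintro a b (h | ⟨h1, h2⟩)
      · exact Or.inl (m.symm' h)
      · exact Or.inr ⟨h2, h1⟩
    · rintro a b c (h | ⟨h1, h2⟩) (h' | ⟨h1', h2'⟩)
      · exact Or.inl (m.trans' h h')
      · exact Or.inr ⟨h1'.imp (m.trans' h) (m.trans' h), h2'⟩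
      · exact Or.inr ⟨h1, h2.imp (m.trans' (m.symm' h')) (m.trans' (m.symm' h'))⟩
      · exact Or.inr ⟨h1, h2'⟩

theorem blockSetoid_nc (S : Set (Fin n)) : IsNoncrossing (blockSetoid S) := by
  intro i j k l hij hjk hkl hik hjl
  rcases (hik : i = k ∨ (i ∈ S ∧ k ∈ S)) with rfl | ⟨hi, _⟩
  · exact absurd (hij.trans hjk) (lt_irrefl i)
  rcases (hjl : j = l ∨ (j ∈ S ∧ l ∈ S)) with rfl | ⟨hj, _⟩
  · exact absurd (hjk.trans hkl) (lt_irrefl j)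
  exact Or.inr ⟨hi, hj⟩

theorem ncClosure_rel {s : Setoid (Fin n)} {a b : Fin n} :
    ncClosure s a b ↔ ∀ w : Setoid (Fin n), IsNoncrossing w → s ≤ w → w a b := by
  constructor
  · intro h w h1 h2; exact h w ⟨h1, h2⟩
  · intro h w hw; exact h w hw.1 hw.2

theorem block_rel (z : Setoid (Fin n)) {S : Set (Fin n)} (h : IsBlock z S)
    {u v : Fin n} (hu : u ∈ S) (hv : v ∈ S) : z u v := by
  obtain ⟨a, ha⟩ := h
  rw [ha] at hu hv
  exact z.trans' (z.symm' hu) hv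

theorem rel_zero_last (hn : 3 ≤ n) (z : Setoid (Fin n)) (hz : IsNoncrossing z)
    (a b c : Fin n) (ha : a.val = 0) (hb : b.val = n - 2) (hc : c.val = n - 1)
    (hab : z a b) (d : Fin n) (hcd : z c d) (hdc : d ≠ c) : z a c := by
  have hdn : d.val < n := d.isLt
  have hd : d.val ≠ n - 1 := fun h => hdc (Fin.ext (h.trans hc.symm))
  by_cases h0 : d.val = 0
  · have hda : d = a := Fin.ext (h0.trans ha.symm)
    exact z.symm' (hda ▸ hcd)
  by_cases h2 : d.val = n - 2
  · have hdb : d = b := Fin.ext (h2.trans hb.symm)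
    exact z.trans' hab (z.symm' (hdb ▸ hcd))
  · have had : z.r a d := hz a d b c (by rw [Fin.lt_def]; omega) (by rw [Fin.lt_def]; omega)
      (by rw [Fin.lt_def]; omega) hab (z.symm' hcd)
    exact z.trans' had (z.symm' hcd)

theorem exists_other (z : Setoid (Fin n)) (c : Fin n) (hc : c.val = n - 1)
    (h : ¬ IsBlock z {a : Fin n | a.val = n - 1}) : ∃ d, z c d ∧ d ≠ c := by
  by_contra hcon
  push_neg at hcon
  apply h
  refine ⟨c, Set.ext fun b => ⟨fun hb => ?_, fun hb => ?_⟩⟩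
  · have hbc : b = c := Fin.ext ((hb : b.val = n - 1).trans hc.symm)
    rw [Set.mem_setOf_eq, hbc]
  · rw [Set.mem_setOf_eq, hcon b hb]
    exact hc

theorem singleton_block (z : Setoid (Fin n)) (c : Fin n) (hc : c.val = n - 1)
    (h : IsBlock z {a : Fin n | a.val = n - 1}) : ∀ d, z c d → d = c := by
  obtain ⟨a, ha⟩ := h
  have hac : z a c := by
    have hm : c ∈ {a : Fin n | a.val = n - 1} := hc
    rwa [ha] at hm
  intro d hcd
  have hd : d ∈ {b | z.r a b} := z.trans' hac hcd
  rw [← ha] at hd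
  exact Fin.ext ((hd : d.val = n - 1).trans hc.symm)

theorem pair_block_sub (z : Setoid (Fin n)) (b : Fin n)
    (hb : b.val = n - 2 ∨ b.val = n - 1)
    (h : IsBlock z {a : Fin n | a.val = n - 2 ∨ a.val = n - 1}) :
    ∀ d, z b d → d.val = n - 2 ∨ d.val = n - 1 := by
  obtain ⟨a, ha⟩ := h
  have hab : z a b := by
    have hm : b ∈ {a : Fin n | a.val = n - 2 ∨ a.val = n - 1} := hb
    rwa [ha] at hm
  intro d hbd
  have hd : d ∈ {c | z.r a c} := z.trans' hab hbd
  rw [← ha] at hd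
  exact hd

theorem block_of_pair (z : Setoid (Fin n)) (b c : Fin n) (hb : b.val = n - 2)
    (hc : c.val = n - 1) (hbc : z b c)
    (hsub : ∀ d, z b d → d.val = n - 2 ∨ d.val = n - 1) :
    IsBlock z {a : Fin n | a.val = n - 2 ∨ a.val = n - 1} := by
  refine ⟨b, Set.ext fun d => ⟨fun hd => ?_, fun hd => hsub d hd⟩⟩
  rcases (hd : d.val = n - 2 ∨ d.val = n - 1) with h | h
  · have hdb : d = b := Fin.ext (h.trans hb.symm)
    rw [Set.mem_setOf_eq, hdb]
  · have hdc : d = c := Fin.ext (h.trans hc.symm)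
    rw [Set.mem_setOf_eq, hdc]
    exact hbc

theorem singleton_classes (z jp : Setoid (Fin n))
    (hzP : ¬ IsBlock z {a : Fin n | a.val = n - 2 ∨ a.val = n - 1})
    (hle : z ≤ jp)
    (hB : IsBlock jp {a : Fin n | a.val = n - 2 ∨ a.val = n - 1}) :
    ∀ a d : Fin n, (a.val = n - 2 ∨ a.val = n - 1) → z a d → d = a := by
  intro a d haP had
  have hdP : d.val = n - 2 ∨ d.val = n - 1 := pair_block_sub jp a haP hB d (hle had)
  rcases haP with h1 | h1 <;> rcases hdP with h2 | h2
  · exact Fin.ext (h2.trans h1.symm)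
  · exact absurd (block_of_pair z a d h1 h2 had
      (fun e he => pair_block_sub jp a (Or.inl h1) hB e (hle he))) hzP
  · exact absurd (block_of_pair z d a h2 h1 (z.symm' had)
      (fun e he => pair_block_sub jp d (Or.inl h2) hB e (hle he))) hzP
  · exact Fin.ext (h2.trans h1.symm)

theorem pe_rel_last (hn : 3 ≤ n) (z : Setoid (Fin n)) (hz : PEmem z)
    (a b c : Fin n) (ha : a.val = 0) (hb : b.val = n - 2) (hc : c.val = n - 1)
    (hab : z a b) : z a c := by
  have hnb : ¬ IsBlock z {a : Fin n | a.val = n - 1} :=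
    fun h => hz.2.2 ⟨h, a, b, ha, hb, hab⟩
  obtain ⟨d, hcd, hdc⟩ := exists_other z c hc hnb
  exact rel_zero_last hn z hz.1 a b c ha hb hc hab d hcd hdc

end AuxPE

set_option maxHeartbeats 4000000 in
/-- For `n ≥ 3`, the subposet `(PE_n, ≤_dref)` is a lattice: any two of its
elements have a greatest lower bound and a least upper bound within `PE_n`. -/
theorem PE_lattice (n : ℕ) (hn : 3 ≤ n) (x y : Setoid (Fin n))
    (hx : PEmem x) (hy : PEmem y) :
    (∃ m, IsMeetPE x y m) ∧ (∃ j, IsJoinPE x y j) := by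
  set e0 : Fin n := ⟨0, by omega⟩ with he0
  set eb : Fin n := ⟨n - 2, by omega⟩ with heb
  set ec : Fin n := ⟨n - 1, by omega⟩ with hec
  have heb0 : eb.val = n - 2 := rfl
  have hec0 : ec.val = n - 1 := rfl
  have he00 : e0.val = 0 := rfl
  have hebec : eb ≠ ec := by
    intro h
    have := congrArg Fin.val h
    rw [heb0, hec0] at this
    omega
  constructor
  · -- MEET
    set m0 : Setoid (Fin n) := x ⊓ y with hm0
    have hm0rel : ∀ a b : Fin n, m0 a b ↔ x a b ∧ y a b := fun a b => Setoid.inf_iff_and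
    have hm0x : m0 ≤ x := fun a b h => ((hm0rel a b).mp h).1
    have hm0y : m0 ≤ y := fun a b h => ((hm0rel a b).mp h).2
    have hm0nc : IsNoncrossing m0 := by
      intro i j k l h1 h2 h3 hik hjl
      exact (hm0rel i j).mpr ⟨hx.1 i j k l h1 h2 h3 (hm0x hik) (hm0x hjl),
        hy.1 i j k l h1 h2 h3 (hm0y hik) (hm0y hjl)⟩
    have hm0L2 : ¬ (IsBlock m0 {a : Fin n | a.val = n - 1} ∧
        ∃ a b : Fin n, a.val = 0 ∧ b.val = n - 2 ∧ m0.r a b) := by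
      rintro ⟨hblk, a, b, ha, hb, hab⟩
      have hxac : x a ec := pe_rel_last hn x hx a b ec ha hb hec0 (hm0x hab)
      have hyac : y a ec := pe_rel_last hn y hy a b ec ha hb hec0 (hm0y hab)
      have hm0ac : m0 a ec := (hm0rel a ec).mpr ⟨hxac, hyac⟩
      have := singleton_block m0 ec hec0 hblk a (m0.symm' hm0ac)
      rw [← this] at hec0
      rw [ha] at hec0
      omega
    by_cases hL1 : IsBlock m0 {a : Fin n | a.val = n - 2 ∨ a.val = n - 1}
    · -- m0 has {n-2, n-1} as a block; split off eb
      set m : Setoid (Fin n) := splitOff m0 eb with hm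
      have hmrel : ∀ a b : Fin n, m a b ↔ m0 a b ∧ (a = eb ↔ b = eb) :=
        fun a b => Iff.rfl
      have hmm0 : m ≤ m0 := fun a b h => ((hmrel a b).mp h).1
      have hmnc : IsNoncrossing m := by
        intro i j k l h1 h2 h3 hik hjl
        have hi : i ≠ eb := by
          intro h
          have hk : k = eb := ((hmrel i k).mp hik).2.mp h
          exact absurd (h1.trans h2) (by rw [h, hk]; exact lt_irrefl eb)
        have hj : j ≠ eb := by
          intro h
          have hl : l = eb := ((hmrel j l).mp hjl).2.mp h
          exact absurd (h2.trans h3) (by rw [h, hl]; exact lt_irrefl eb)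
        exact (hmrel i j).mpr ⟨hm0nc i j k l h1 h2 h3 (hmm0 hik) (hmm0 hjl),
          iff_of_false hi hj⟩
      have hmL1 : ¬ IsBlock m {a : Fin n | a.val = n - 2 ∨ a.val = n - 1} := by
        intro hB
        have h1 : m eb ec := block_rel m hB (Or.inl heb0) (Or.inr hec0)
        exact hebec (((hmrel eb ec).mp h1).2.mp rfl).symm
      have hmL2 : ¬ (IsBlock m {a : Fin n | a.val = n - 1} ∧
          ∃ a b : Fin n, a.val = 0 ∧ b.val = n - 2 ∧ m.r a b) := by
        rintro ⟨_, a, b, ha, hb, hab⟩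
        have hbeb : b = eb := Fin.ext (by rw [hb, heb0])
        have haeb : a = eb := ((hmrel a b).mp hab).2.mpr hbeb
        rw [haeb, heb0] at ha
        omega
      refine ⟨m, ⟨hmnc, hmL1, hmL2⟩, hmm0.trans hm0x, hmm0.trans hm0y, ?_⟩
      intro z hz hzx hzy
      have hzm0 : z ≤ m0 := fun a b h => (hm0rel a b).mpr ⟨hzx h, hzy h⟩
      have hkey : ∀ a b : Fin n, z a b → a = eb → b = eb := by
        intro a b hab ha
        subst ha
        by_contra hne
        have hbP : b.val = n - 2 ∨ b.val = n - 1 :=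
          pair_block_sub m0 eb (Or.inl heb0) hL1 b (hzm0 hab)
        rcases hbP with h | h
        · exact hne (Fin.ext (by rw [h, heb0]))
        · exact hz.2.1 (block_of_pair z eb b heb0 h hab
            (fun d hd => pair_block_sub m0 eb (Or.inl heb0) hL1 d (hzm0 hd)))
      intro a b hab
      exact (hmrel a b).mpr ⟨hzm0 hab,
        ⟨hkey a b hab, fun h => hkey b a (z.symm' hab) h⟩⟩
    · refine ⟨m0, ⟨hm0nc, hL1, hm0L2⟩, hm0x, hm0y, ?_⟩
      intro z hz hzx hzy a b h
      exact (hm0rel a b).mpr ⟨hzx h, hzy h⟩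
  · -- JOIN
    set j0 : Setoid (Fin n) := joinNC x y with hj0
    have hj0rel : ∀ a b : Fin n, j0 a b ↔
        ∀ w : Setoid (Fin n), IsNoncrossing w → x ⊔ y ≤ w → w a b :=
      fun a b => ncClosure_rel
    have hxj0 : x ≤ j0 := by
      intro a b h
      exact (hj0rel a b).mpr fun w hnc hle => hle (Setoid.le_def.mp le_sup_left h)
    have hyj0 : y ≤ j0 := by
      intro a b h
      exact (hj0rel a b).mpr fun w hnc hle => hle (Setoid.le_def.mp le_sup_right h)
    have hj0le : ∀ z : Setoid (Fin n), IsNoncrossing z → x ≤ z → y ≤ z → j0 ≤ z := by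
      intro z hnc hxz hyz a b h
      exact (hj0rel a b).mp h z hnc (sup_le hxz hyz)
    have hj0nc : IsNoncrossing j0 := by
      intro i j k l h1 h2 h3 hik hjl
      refine (hj0rel i j).mpr fun w hnc hle => ?_
      exact hnc i j k l h1 h2 h3 ((hj0rel i k).mp hik w hnc hle)
        ((hj0rel j l).mp hjl w hnc hle)
    have hj0L1 : ¬ IsBlock j0 {a : Fin n | a.val = n - 2 ∨ a.val = n - 1} := by
      intro hB
      have hxs := singleton_classes x j0 hx.2.1 hxj0 hB
      have hys := singleton_classes y j0 hy.2.1 hyj0 hB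
      set u : Setoid (Fin n) := blockSetoid {a : Fin n | a.val < n - 2} with hu
      have hunc : IsNoncrossing u := blockSetoid_nc _
      have hsmall : ∀ (z : Setoid (Fin n)),
          (∀ a d : Fin n, (a.val = n - 2 ∨ a.val = n - 1) → z a d → d = a) → z ≤ u := by
        intro z hs a b h
        by_cases hab : a = b
        · exact Or.inl hab
        refine Or.inr ⟨?_, ?_⟩
        · show a.val < n - 2
          by_contra hcon
          have haP : a.val = n - 2 ∨ a.val = n - 1 := by
            have := a.isLt; omega
          exact hab (hs a b haP h).symm
        · show b.val < n - 2
          by_contra hcon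
          have hbP : b.val = n - 2 ∨ b.val = n - 1 := by
            have := b.isLt; omega
          exact hab (hs b a hbP (z.symm' h))
      have hju : j0 ≤ u := hj0le u hunc (hsmall x hxs) (hsmall y hys)
      have h1 : j0 eb ec := block_rel j0 hB (Or.inl heb0) (Or.inr hec0)
      rcases (hju h1 : eb = ec ∨ (eb.val < n - 2 ∧ ec.val < n - 2)) with h | ⟨h, _⟩
      · exact hebec h
      · have h' : eb.val < n - 2 := h
        rw [heb0] at h'
        omega
    by_cases hL2 : IsBlock j0 {a : Fin n | a.val = n - 1} ∧
        ∃ a b : Fin n, a.val = 0 ∧ b.val = n - 2 ∧ j0.r a b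
    · obtain ⟨hblk, a0, b0, ha0, hb0, hab0⟩ := hL2
      have ha0e : a0 = e0 := Fin.ext (by rw [ha0, he00])
      have hb0e : b0 = eb := Fin.ext (by rw [hb0, heb0])
      rw [ha0e, hb0e] at hab0
      have hab0' : j0 e0 eb := hab0
      have hsing : ∀ d, j0 ec d → d = ec := singleton_block j0 ec hec0 hblk
      set j : Setoid (Fin n) := mergeTwo j0 e0 ec with hj
      have hjrel : ∀ a b : Fin n, j a b ↔
          j0 a b ∨ ((j0 a e0 ∨ j0 a ec) ∧ (j0 b e0 ∨ j0 b ec)) := fun a b => Iff.rfl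
      have hj0j : j0 ≤ j := fun a b h => (hjrel a b).mpr (Or.inl h)
      have hC0 : ∀ a : Fin n, a ≠ ec → (j0 a e0 ∨ j0 a ec) → j0 a e0 := by
        intro a ha h
        rcases h with h | h
        · exact h
        · exact absurd (hsing a (j0.symm' h)) ha
      have hjnc : IsNoncrossing j := by
        intro i j' k l h1 h2 h3 hik hjl
        have hlt : ∀ p q : Fin n, p < q → p ≠ ec := by
          intro p q hpq h
          have h1 := Fin.lt_def.mp hpq
          have h2 := q.isLt
          rw [h, hec0] at h1
          omega
        have hknec : k ≠ ec := hlt k l h3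
        have hinec : i ≠ ec := hlt i j' h1
        have hjnec : j' ≠ ec := hlt j' k h2
        have hik0 : j0 i k := by
          rcases (hjrel i k).mp hik with h | ⟨hi, hk⟩
          · exact h
          · exact j0.trans' (hC0 i hinec hi) (j0.symm' (hC0 k hknec hk))
        rcases (hjrel j' l).mp hjl with h | ⟨hj', hl⟩
        · exact hj0j (hj0nc i j' k l h1 h2 h3 hik0 h)
        · have hj'0 : j0 j' e0 := hC0 j' hjnec hj'
          have hie0 : j0 i e0 := by
            by_cases he : e0 = i
            · exact he ▸ j0.refl' e0
            · have h0i : e0 < i := by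
                rw [Fin.lt_def, he00]
                rcases Nat.eq_zero_or_pos i.val with h | h
                · exact absurd (Fin.ext (h.trans he00.symm)).symm he
                · exact h
              exact j0.symm' (hj0nc e0 i j' k h0i h1 h2 (j0.symm' hj'0) hik0)
          exact (hjrel i j').mpr (Or.inr ⟨Or.inl hie0, Or.inl hj'0⟩)
      have hjL1 : ¬ IsBlock j {a : Fin n | a.val = n - 2 ∨ a.val = n - 1} := by
        intro hB
        have h1 : j eb e0 := hj0j (j0.symm' hab0')
        have := pair_block_sub j eb (Or.inl heb0) hB e0 h1
        rw [he00] at this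
        omega
      have hjL2 : ¬ (IsBlock j {a : Fin n | a.val = n - 1} ∧
          ∃ a b : Fin n, a.val = 0 ∧ b.val = n - 2 ∧ j.r a b) := by
        rintro ⟨hblk', _⟩
        have h1 : j ec e0 := (hjrel ec e0).mpr
          (Or.inr ⟨Or.inr (j0.refl' ec), Or.inl (j0.refl' e0)⟩)
        have := singleton_block j ec hec0 hblk' e0 h1
        have := congrArg Fin.val this
        rw [he00, hec0] at this
        omega
      refine ⟨j, ⟨hjnc, hjL1, hjL2⟩, hxj0.trans hj0j, hyj0.trans hj0j, ?_⟩
      intro z hz hxz hyz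
      have hj0z : j0 ≤ z := hj0le z hz.1 hxz hyz
      have hz0b : z e0 eb := hj0z hab0'
      have hz0c : z e0 ec := pe_rel_last hn z hz e0 eb ec he00 heb0 hec0 hz0b
      intro a b h
      rcases (hjrel a b).mp h with h | ⟨ha, hb⟩
      · exact hj0z h
      · have hza : z a e0 := by
          rcases ha with h' | h'
          · exact hj0z h'
          · exact z.trans' (hj0z h') (z.symm' hz0c)
        have hzb : z b e0 := by
          rcases hb with h' | h'
          · exact hj0z h'
          · exact z.trans' (hj0z h') (z.symm' hz0c)
        exact z.trans' hza (z.symm' hzb)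
    · refine ⟨j0, ⟨hj0nc, hj0L1, hL2⟩, hxj0, hyj0, ?_⟩
      intro z hz hxz hyz
      exact hj0le z hz.1 hxz hyz
end

section
/- For n ≥ 3 and x, x' ∈ PE_n, the join x ∨ x' computed in the noncrossing partition lattice NC_n never has {n-1, n} as a block. -/
/-- For `x, x' ∈ PE_n`, the join computed in the noncrossing partition
lattice `NC_n` never has `{n-1, n}` as a block. -/
theorem PE_join_no_bad_block (n : ℕ) (hn : 3 ≤ n) (x x' : Setoid (Fin n))
    (hx : PEmem x) (hx' : PEmem x') :
    ¬ IsBlock (joinNC x x') {a : Fin n | a.val = n - 2 ∨ a.val = n - 1} := by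
  intro h
  obtain ⟨a, ha⟩ := h
  have hn2 : n - 2 < n := by omega
  have hn1 : n - 1 < n := by omega
  set p : Fin n := ⟨n - 2, hn2⟩ with hp
  set q : Fin n := ⟨n - 1, hn1⟩ with hq
  have hpS : p ∈ {a : Fin n | a.val = n - 2 ∨ a.val = n - 1} := Or.inl rfl
  have hqS : q ∈ {a : Fin n | a.val = n - 2 ∨ a.val = n - 1} := Or.inr rfl
  rw [ha, Set.mem_setOf_eq] at hpS hqS
  have hJpq : (joinNC x x').r p q := (joinNC x x').trans' ((joinNC x x').symm' hpS) hqS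
  have hclosed : ∀ b : Fin n, (joinNC x x').r q b → b.val = n - 2 ∨ b.val = n - 1 := by
    intro b hb
    have hab : (joinNC x x').r a b := (joinNC x x').trans' hqS hb
    have : b ∈ {a : Fin n | a.val = n - 2 ∨ a.val = n - 1} := by rw [ha]; exact hab
    exact this
  have hxle : x ≤ joinNC x x' := by
    refine le_sInf ?_
    intro t ht
    exact le_trans le_sup_left ht.2
  have hx'le : x' ≤ joinNC x x' := by
    refine le_sInf ?_
    intro t ht
    exact le_trans le_sup_right ht.2
  -- key: in any PE element below the join, q is a singleton
  have key : ∀ w : Setoid (Fin n), PEmem w → w ≤ joinNC x x' →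
      ∀ b : Fin n, w.r q b → b = q := by
    intro w hw hwle b hb
    have hJ : (joinNC x x').r q b := Setoid.le_def.mp hwle hb
    rcases hclosed b hJ with hb2 | hb1
    · -- b = p, so w relates q and p; then the bad set is a block of w
      exfalso
      apply hw.2.1
      refine ⟨q, Set.ext fun c => ?_⟩
      simp only [Set.mem_setOf_eq]
      constructor
      · rintro (hc | hc)
        · have : c = b := Fin.ext (hc.trans hb2.symm)
          rw [this]
          exact hb
        · have : c = q := Fin.ext hc
          subst this
          exact w.refl' q
      · intro hc
        exact hclosed c (Setoid.le_def.mp hwle hc)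
    · exact Fin.ext hb1
  have hqx := key x hx hxle
  have hqx' := key x' hx' hx'le
  -- the noncrossing partition with q singleton and everything else one block
  set y : Setoid (Fin n) := blockSetoid {a : Fin n | a.val ≠ n - 1} with hy
  have hyrel : ∀ c d : Fin n, y.r c d ↔ (c = d ∨ (c.val ≠ n - 1 ∧ d.val ≠ n - 1)) := by
    intro c d; exact Iff.rfl
  have hync : IsNoncrossing y := by
    intro i j k l hij hjk hkl _ _
    have h1 : i.val < j.val := hij
    have h2 : j.val < k.val := hjk
    have h3 : k.val < l.val := hkl
    have h4 : l.val < n := l.isLt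
    rw [hyrel]
    right
    exact ⟨by omega, by omega⟩
  have hmono : ∀ w : Setoid (Fin n), (∀ b : Fin n, w.r q b → b = q) → w ≤ y := by
    intro w hw
    rw [Setoid.le_def]
    intro c d hcd
    refine (hyrel c d).mpr ?_
    by_cases hc : c.val = n - 1
    · have : c = q := Fin.ext hc
      subst this
      exact Or.inl (hw d hcd).symm
    · by_cases hd : d.val = n - 1
      · have : d = q := Fin.ext hd
        subst this
        exact absurd (hw c (w.symm' hcd)) (by intro he; exact hc (by rw [he]))
      · exact Or.inr ⟨hc, hd⟩
  have hJy : joinNC x x' ≤ y :=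
    sInf_le ⟨hync, sup_le (hmono x hqx) (hmono x' hqx')⟩
  have hfin := (hyrel p q).mp (Setoid.le_def.mp hJy hJpq)
  rcases hfin with hpq | ⟨_, hq1⟩
  · have : p.val = q.val := by rw [hpq]
    simp only [hp, hq] at this
    omega
  · exact hq1 rfl
end

section
/- For n ≥ 3, the lattice (PE_n, ≤_dref) is graded: if x ⋖ y is a cover relation in PE_n, then the number of blocks of x exceeds the number of blocks of y by exactly one. -/
section PEauxiliary

set_option linter.deprecated false

variable {n : ℕ}

namespace PEaux

/-- The equivalence class of `p`. -/
def cls (x : Setoid (Fin n)) (p : Fin n) : Set (Fin n) := {q | x.r p q}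

lemma mem_cls {x : Setoid (Fin n)} {p q : Fin n} : q ∈ cls x p ↔ x.r p q := Iff.rfl

lemma blocks_eq (x : Setoid (Fin n)) :
    {B : Set (Fin n) | IsBlock x B} = Set.range (cls x) := by
  ext B
  simp only [Set.mem_setOf_eq, IsBlock, Set.mem_range, cls]
  exact ⟨fun ⟨a, ha⟩ => ⟨a, ha.symm⟩, fun ⟨a, ha⟩ => ⟨a, ha.symm⟩⟩

lemma cls_eq_iff {x : Setoid (Fin n)} {p q : Fin n} : cls x p = cls x q ↔ x.r p q := by
  constructor
  · intro h
    have : q ∈ cls x p := h ▸ (x.refl' q)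
    exact this
  · intro h
    ext r
    exact ⟨fun hr => x.trans' (x.symm' h) hr, fun hr => x.trans' h hr⟩

/-- Push a block forward along a coarser setoid. -/
def push (y : Setoid (Fin n)) (B : Set (Fin n)) : Set (Fin n) := {q | ∃ p ∈ B, y.r p q}

lemma push_cls {x y : Setoid (Fin n)} (h : x ≤ y) (p : Fin n) :
    push y (cls x p) = cls y p := by
  ext q
  constructor
  · rintro ⟨p', hp', hq⟩
    exact y.trans' (h hp') hq
  · intro hq
    exact ⟨p, x.refl' p, hq⟩

lemma range_cls_eq {x y : Setoid (Fin n)} (h : x ≤ y) :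
    Set.range (cls y) = push y '' Set.range (cls x) := by
  ext B
  constructor
  · rintro ⟨p, rfl⟩
    exact ⟨cls x p, ⟨p, rfl⟩, push_cls h p⟩
  · rintro ⟨_, ⟨p, rfl⟩, rfl⟩
    exact ⟨p, (push_cls h p).symm⟩

lemma ncard_blocks_le {x y : Setoid (Fin n)} (h : x ≤ y) :
    (Set.range (cls y)).ncard ≤ (Set.range (cls x)).ncard := by
  rw [range_cls_eq h]
  exact Set.ncard_image_le (Set.finite_range _)

lemma ncard_blocks_lt {x y : Setoid (Fin n)} (h : x ≤ y) {p q : Fin n}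
    (hy : y.r p q) (hx : ¬ x.r p q) :
    (Set.range (cls y)).ncard < (Set.range (cls x)).ncard := by
  have hfin : (Set.range (cls x)).Finite := Set.finite_range _
  have hmem : cls x q ∈ Set.range (cls x) := ⟨q, rfl⟩
  have himg : Set.range (cls y) = push y '' (Set.range (cls x) \ {cls x q}) := by
    ext B
    constructor
    · rintro ⟨r, rfl⟩
      by_cases hr : cls x r = cls x q
      · have hqr : x.r q r := cls_eq_iff.1 hr.symm
        have h1 : cls y r = cls y p := by
          rw [cls_eq_iff]
          exact y.trans' (y.symm' (h hqr)) (y.symm' hy)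
        refine ⟨cls x p, ⟨⟨p, rfl⟩, ?_⟩, by rw [push_cls h, h1]⟩
        simp only [Set.mem_singleton_iff]
        intro hc
        exact hx (cls_eq_iff.1 hc)
      · exact ⟨cls x r, ⟨⟨r, rfl⟩, hr⟩, push_cls h r⟩
    · rintro ⟨_, ⟨⟨r, rfl⟩, -⟩, rfl⟩
      exact ⟨r, (push_cls h r).symm⟩
  calc (Set.range (cls y)).ncard ≤ (Set.range (cls x) \ {cls x q}).ncard := by
        rw [himg]; exact Set.ncard_image_le (hfin.diff)
    _ < (Set.range (cls x)).ncard := by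
        have := Set.ncard_diff_singleton_add_one hmem hfin
        omega

/-- The setoid obtained from `x` by merging the classes of `a` and `b`. -/
def mrg (x : Setoid (Fin n)) (a b : Fin n) : Setoid (Fin n) where
  r p q := x.r p q ∨ (x.r a p ∧ x.r b q) ∨ (x.r b p ∧ x.r a q)
  iseqv := by
    refine ⟨fun p => Or.inl (x.refl' p), ?_, ?_⟩
    · rintro p q (h | ⟨h1, h2⟩ | ⟨h1, h2⟩)
      · exact Or.inl (x.symm' h)
      · exact Or.inr (Or.inr ⟨h2, h1⟩)
      · exact Or.inr (Or.inl ⟨h2, h1⟩)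
    · rintro p q r (h | ⟨h1, h2⟩ | ⟨h1, h2⟩) (h' | ⟨h3, h4⟩ | ⟨h3, h4⟩)
      · exact Or.inl (x.trans' h h')
      · exact Or.inr (Or.inl ⟨x.trans' h3 (x.symm' h), h4⟩)
      · exact Or.inr (Or.inr ⟨x.trans' h3 (x.symm' h), h4⟩)
      · exact Or.inr (Or.inl ⟨h1, x.trans' h2 h'⟩)
      · exact Or.inl (x.trans' (x.symm' h1) (x.trans' (x.trans' h3 (x.symm' h2)) h4))
      · exact Or.inl (x.trans' (x.symm' h1) h4)
      · exact Or.inr (Or.inr ⟨h1, x.trans' h2 h'⟩)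
      · exact Or.inl (x.trans' (x.symm' h1) h4)
      · exact Or.inl (x.trans' (x.trans' (x.trans' (x.symm' h1) h3) (x.symm' h2)) h4)

lemma mrg_rel {x : Setoid (Fin n)} {a b p q : Fin n} :
    (mrg x a b).r p q ↔
      x.r p q ∨ (x.r a p ∧ x.r b q) ∨ (x.r b p ∧ x.r a q) := Iff.rfl

lemma le_mrg (x : Setoid (Fin n)) (a b : Fin n) : x ≤ mrg x a b :=
  fun _ _ h => Or.inl h

lemma mrg_rel_ab (x : Setoid (Fin n)) (a b : Fin n) : (mrg x a b).r a b :=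
  Or.inr (Or.inl ⟨x.refl' a, x.refl' b⟩)

lemma lt_mrg {x : Setoid (Fin n)} {a b : Fin n} (hab : ¬ x.r a b) : x < mrg x a b := by
  refine lt_of_le_of_ne (le_mrg x a b) fun h => hab ?_
  have := mrg_rel_ab x a b
  rw [← h] at this
  exact this

lemma mrg_le {x y : Setoid (Fin n)} {a b : Fin n} (h : x ≤ y) (hab : y.r a b) :
    mrg x a b ≤ y := by
  rintro p q (h' | ⟨h1, h2⟩ | ⟨h1, h2⟩)
  · exact h h'
  · exact y.trans' (y.symm' (h h1)) (y.trans' hab (h h2))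
  · exact y.trans' (y.symm' (h h1)) (y.trans' (y.symm' hab) (h h2))

lemma mrg_rel_of_mem {x : Setoid (Fin n)} {a b p q : Fin n}
    (hp : x.r a p ∨ x.r b p) (hq : x.r a q ∨ x.r b q) : (mrg x a b).r p q := by
  rcases hp with hp | hp <;> rcases hq with hq | hq
  · exact Or.inl (x.trans' (x.symm' hp) hq)
  · exact Or.inr (Or.inl ⟨hp, hq⟩)
  · exact Or.inr (Or.inr ⟨hp, hq⟩)
  · exact Or.inl (x.trans' (x.symm' hp) hq)

lemma mrg_rel_cases {x : Setoid (Fin n)} {a b p q : Fin n}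
    (h : (mrg x a b).r p q) :
    x.r p q ∨ ((x.r a p ∨ x.r b p) ∧ (x.r a q ∨ x.r b q)) := by
  rcases h with h | ⟨h1, h2⟩ | ⟨h1, h2⟩
  · exact Or.inl h
  · exact Or.inr ⟨Or.inl h1, Or.inr h2⟩
  · exact Or.inr ⟨Or.inr h1, Or.inl h2⟩

lemma cls_mrg (x : Setoid (Fin n)) (a b : Fin n) (r : Fin n) :
    cls (mrg x a b) r = cls x r ∨ cls (mrg x a b) r = cls x a ∪ cls x b := by
  by_cases hr : x.r a r ∨ x.r b r
  · right
    ext q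
    constructor
    · intro hq
      rcases mrg_rel_cases hq with h | ⟨-, h2⟩
      · rcases hr with hr | hr
        · exact Or.inl (x.trans' hr h)
        · exact Or.inr (x.trans' hr h)
      · exact h2
    · intro hq
      exact mrg_rel_of_mem hr hq
  · left
    push_neg at hr
    ext q
    constructor
    · intro hq
      rcases hq with h | ⟨h1, -⟩ | ⟨h1, -⟩
      · exact h
      · exact absurd h1 hr.1
      · exact absurd h1 hr.2
    · intro hq
      exact Or.inl hq

lemma ncard_mrg {x : Setoid (Fin n)} {a b : Fin n} (hab : ¬ x.r a b) :
    (Set.range (cls x)).ncard ≤ (Set.range (cls (mrg x a b))).ncard + 1 := by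
  set z := mrg x a b with hz
  have hxz : x ≤ z := le_mrg x a b
  have hfin : (Set.range (cls x)).Finite := Set.finite_range _
  have hmem : cls x b ∈ Set.range (cls x) := ⟨b, rfl⟩
  have hinj : Set.InjOn (push z) (Set.range (cls x) \ {cls x b}) := by
    rintro B ⟨⟨p, rfl⟩, hB⟩ B' ⟨⟨r, rfl⟩, hB'⟩ hE
    rw [push_cls hxz, push_cls hxz] at hE
    have hpr : z.r p r := cls_eq_iff.1 hE
    rcases hpr with h | ⟨h1, h2⟩ | ⟨h1, h2⟩
    · exact cls_eq_iff.2 h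
    · exact absurd (cls_eq_iff.2 (x.symm' h2)) hB'
    · exact absurd (cls_eq_iff.2 (x.symm' h1)) hB
  have h1 : (Set.range (cls x) \ {cls x b}).ncard ≤ (Set.range (cls z)).ncard := by
    rw [← Set.ncard_image_of_injOn hinj]
    refine Set.ncard_le_ncard ?_ (Set.finite_range _)
    rintro B ⟨_, ⟨⟨p, rfl⟩, -⟩, rfl⟩
    rw [push_cls hxz]
    exact ⟨p, rfl⟩
  have h2 := Set.ncard_diff_singleton_add_one hmem hfin
  omega

lemma strict_exists {x y : Setoid (Fin n)} (h : x < y) :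
    ∃ p q, y.r p q ∧ ¬ x.r p q := by
  by_contra hc
  push_neg at hc
  exact h.ne (le_antisymm h.le fun p q hpq => hc p q hpq)

/-- Noncrossing of the "minimal merge". -/
lemma nc_minmerge {x y : Setoid (Fin n)} (hxnc : IsNoncrossing x) (hync : IsNoncrossing y)
    (hxy : x ≤ y) {m b : Fin n} (hymb : y.r m b) (hxmb : ¬ x.r m b)
    (hmin : ∀ c, y.r m c → m ≤ c) (hbmin : ∀ c, y.r m c → ¬ x.r m c → b ≤ c) :
    IsNoncrossing (mrg x m b) := by
  have hM : ∀ p, (x.r m p ∨ x.r b p) → y.r m p := by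
    rintro p (h | h)
    · exact hxy h
    · exact y.trans' hymb (hxy h)
  intro i j k l h1 h2 h3 h4 h5
  rcases mrg_rel_cases h4 with hik | ⟨hiM, hkM⟩ <;>
    rcases mrg_rel_cases h5 with hjl | ⟨hjM, hlM⟩
  · exact Or.inl (hxnc i j k l h1 h2 h3 hik hjl)
  · -- Case B : x.r i k, j l ∈ M
    have hyjl : y.r j l := y.trans' (y.symm' (hM j hjM)) (hM l hlM)
    have hyij : y.r i j := hync i j k l h1 h2 h3 (hxy hik) hyjl
    have hymi : y.r m i := y.trans' (hM j hjM) (y.symm' hyij)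
    by_cases hmi : x.r m i
    · exact mrg_rel_of_mem (Or.inl hmi) hjM
    · have hbi : b ≤ i := hbmin i hymi hmi
      rcases hjM with hmj | hbj
      · rcases hlM with hml | hbl
        · exact Or.inl (hxnc i j k l h1 h2 h3 hik (x.trans' (x.symm' hmj) hml))
        · have hmlt : m < i := lt_of_le_of_ne (hmin i hymi) fun h => hmi (h ▸ x.refl' m)
          exact absurd (hxnc m i j k hmlt h1 h2 hmj hik) hmi
      · rcases eq_or_lt_of_le hbi with rfl | hbi'
        · exact mrg_rel_of_mem (Or.inr (x.refl' b)) (Or.inr hbj)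
        · exact mrg_rel_of_mem (Or.inr (hxnc b i j k hbi' h1 h2 hbj hik)) (Or.inr hbj)
  · -- Case C : i k ∈ M, x.r j l
    have hyik : y.r i k := y.trans' (y.symm' (hM i hiM)) (hM k hkM)
    have hyij : y.r i j := hync i j k l h1 h2 h3 hyik (hxy hjl)
    have hymj : y.r m j := y.trans' (hM i hiM) hyij
    by_cases hmj : x.r m j
    · exact mrg_rel_of_mem hiM (Or.inl hmj)
    · have hbj : b ≤ j := hbmin j hymj hmj
      rcases hkM with hmk | hbk
      · have hmlt : m < j := lt_of_le_of_lt (hmin i (hM i hiM)) h1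
        exact absurd (hxnc m j k l hmlt h2 h3 hmk hjl) hmj
      · rcases eq_or_lt_of_le hbj with rfl | hbj'
        · exact mrg_rel_of_mem hiM (Or.inr (x.refl' b))
        · exact mrg_rel_of_mem hiM (Or.inr (hxnc b j k l hbj' h2 h3 hbk hjl))
  · exact mrg_rel_of_mem hiM hjM

/-- Noncrossing of the "top merge". -/
lemma nc_topmerge {x : Setoid (Fin n)} (hxnc : IsNoncrossing x) {a w : Fin n}
    (ha : ∀ c, a ≤ c) (hw : ∀ c, c ≤ w) (hsing : ∀ c, x.r w c → c = w) :
    IsNoncrossing (mrg x a w) := by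
  intro i j k l h1 h2 h3 h4 h5
  rcases mrg_rel_cases h4 with hik | ⟨hiM, hkM⟩ <;>
    rcases mrg_rel_cases h5 with hjl | ⟨hjM, hlM⟩
  · exact Or.inl (hxnc i j k l h1 h2 h3 hik hjl)
  · -- x.r i k, j l ∈ M
    have haj : x.r a j := by
      rcases hjM with h | h
      · exact h
      · exact absurd (hsing j h) (ne_of_lt (lt_of_lt_of_le (lt_trans h2 h3) (hw l)) : j ≠ w)
    rcases hlM with hal | hwl
    · exact Or.inl (hxnc i j k l h1 h2 h3 hik (x.trans' (x.symm' haj) hal))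
    · by_cases hai : x.r a i
      · exact mrg_rel_of_mem (Or.inl hai) (Or.inl haj)
      · have halt : a < i := lt_of_le_of_ne (ha i) fun h => hai (h ▸ x.refl' a)
        exact absurd (hxnc a i j k halt h1 h2 haj hik) hai
  · -- i k ∈ M, x.r j l
    have hak : x.r a k := by
      rcases hkM with h | h
      · exact h
      · exact absurd (hsing k h) (ne_of_lt (lt_of_lt_of_le h3 (hw l)) : k ≠ w)
    have hai : x.r a i := by
      rcases hiM with h | h
      · exact h
      · exact absurd (hsing i h)
          (ne_of_lt (lt_of_lt_of_le (lt_trans (lt_trans h1 h2) h3) (hw l)) : i ≠ w)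
    exact Or.inl (hxnc i j k l h1 h2 h3 (x.trans' (x.symm' hai) hak) hjl)
  · exact mrg_rel_of_mem hiM hjM


lemma Sw_eq (hn : 3 ≤ n) :
    {a : Fin n | a.val = n - 1} = ({⟨n - 1, by omega⟩} : Set (Fin n)) := by
  ext a
  simp only [Set.mem_setOf_eq, Set.mem_singleton_iff, Fin.ext_iff]

lemma mrg_not_L1 (hn : 3 ≤ n) {x y : Setoid (Fin n)} (hxy : x ≤ y)
    {m b : Fin n} (hymb : y.r m b) (hxmb : ¬ x.r m b)
    (hmin : ∀ c, y.r m c → m ≤ c)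
    (hx1 : ¬ IsBlock x {a : Fin n | a.val = n - 2 ∨ a.val = n - 1})
    (hy1 : ¬ IsBlock y {a : Fin n | a.val = n - 2 ∨ a.val = n - 1}) :
    ¬ IsBlock (mrg x m b) {a : Fin n | a.val = n - 2 ∨ a.val = n - 1} := by
  rintro ⟨r, hr⟩
  have hr' : {a : Fin n | a.val = n - 2 ∨ a.val = n - 1} = cls (mrg x m b) r := hr
  rcases cls_mrg x m b r with hc | hc
  · exact hx1 ⟨r, hr'.trans hc⟩
  · have hSU : {a : Fin n | a.val = n - 2 ∨ a.val = n - 1} = cls x m ∪ cls x b :=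
      hr'.trans hc
    have hmS : m ∈ {a : Fin n | a.val = n - 2 ∨ a.val = n - 1} := by
      rw [hSU]; exact Or.inl (x.refl' m)
    have hbS : b ∈ {a : Fin n | a.val = n - 2 ∨ a.val = n - 1} := by
      rw [hSU]; exact Or.inr (x.refl' b)
    have hmS' : m.val = n - 2 ∨ m.val = n - 1 := hmS
    have hbS' : b.val = n - 2 ∨ b.val = n - 1 := hbS
    have hmb' : m < b := lt_of_le_of_ne (hmin b hymb) fun h => hxmb (h ▸ x.refl' m)
    have hmvb : m.val < b.val := hmb'
    have hbvlt : b.val < n := b.isLt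
    have hvals : m.val = n - 2 ∧ b.val = n - 1 := by
      rcases hmS' with h | h <;> rcases hbS' with h' | h' <;> omega
    apply hy1
    refine ⟨m, ?_⟩
    have : {c : Fin n | y.r m c} = {a : Fin n | a.val = n - 2 ∨ a.val = n - 1} := by
      ext c
      constructor
      · intro hcmem
        have h1 : m ≤ c := hmin c hcmem
        have h2 : m.val ≤ c.val := h1
        have h3 : c.val < n := c.isLt
        simp only [Set.mem_setOf_eq]
        omega
      · intro hcmem
        have hc' : c.val = n - 2 ∨ c.val = n - 1 := hcmem
        have : c = m ∨ c = b := by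
          rcases hc' with h | h
          · exact Or.inl (Fin.ext (by omega))
          · exact Or.inr (Fin.ext (by omega))
        rcases this with rfl | rfl
        · exact y.refl' c
        · exact hymb
    exact this.symm

lemma mrg_L2_analysis (hn : 3 ≤ n) {x y : Setoid (Fin n)} (hxy : x ≤ y)
    {m b : Fin n} (hymb : y.r m b) (hxmb : ¬ x.r m b)
    (hmin : ∀ c, y.r m c → m ≤ c)
    (hx2 : ¬ (IsBlock x {a : Fin n | a.val = n - 1} ∧
      ∃ a b : Fin n, a.val = 0 ∧ b.val = n - 2 ∧ x.r a b))
    (hbad : IsBlock (mrg x m b) {a : Fin n | a.val = n - 1} ∧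
      ∃ a c : Fin n, a.val = 0 ∧ c.val = n - 2 ∧ (mrg x m b).r a c) :
    (∀ c, x.r (⟨n - 1, by omega⟩ : Fin n) c → c = ⟨n - 1, by omega⟩) ∧
      y.r m ⟨0, by omega⟩ := by
  obtain ⟨⟨r, hr⟩, a, c, ha0, hc2, hac⟩ := hbad
  have hr' : ({⟨n - 1, by omega⟩} : Set (Fin n)) = cls (mrg x m b) r := by
    rw [← Sw_eq hn]; exact hr
  have hrw : r = (⟨n - 1, by omega⟩ : Fin n) := by
    have : r ∈ cls (mrg x m b) r := (mrg x m b).refl' r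
    rw [← hr'] at this
    exact this
  subst hrw
  have hsing : ∀ c, x.r (⟨n - 1, by omega⟩ : Fin n) c → c = ⟨n - 1, by omega⟩ := by
    intro d hd
    have : d ∈ cls (mrg x m b) (⟨n - 1, by omega⟩ : Fin n) := Or.inl hd
    rw [← hr'] at this
    exact this
  refine ⟨hsing, ?_⟩
  have ha' : a = (⟨0, by omega⟩ : Fin n) := Fin.ext ha0
  rcases hac with hxac | ⟨h1, h2⟩ | ⟨h1, h2⟩
  · exfalso
    apply hx2
    refine ⟨⟨⟨n - 1, by omega⟩, ?_⟩, a, c, ha0, hc2, hxac⟩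
    rw [Sw_eq hn]
    ext d
    constructor
    · rintro rfl
      exact x.refl' _
    · intro hd
      exact hsing d hd
  · rw [← ha']
    exact hxy h1
  · exfalso
    have hyma : y.r m a := y.trans' hymb (hxy h1)
    have hma : m ≤ a := hmin a hyma
    have : m = a := by
      apply Fin.ext
      have h' : m.val ≤ a.val := hma
      omega
    subst this
    exact hxmb (x.symm' h1)

lemma minmerge_package (hn : 3 ≤ n) {x y : Setoid (Fin n)}
    (hxPE : PEmem x) (hyPE : PEmem y) (hxy : x ≤ y)
    (hcard : {B : Set (Fin n) | IsBlock y B}.ncard + 2 ≤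
      {B : Set (Fin n) | IsBlock x B}.ncard)
    {p q : Fin n} (hpq : y.r p q) (hnpq : ¬ x.r p q) :
    (∃ z, PEmem z ∧ x < z ∧ z < y) ∨
      ((∀ c, x.r (⟨n - 1, by omega⟩ : Fin n) c → c = ⟨n - 1, by omega⟩) ∧
        y.r p ⟨0, by omega⟩ ∧
        y.r (⟨0, by omega⟩ : Fin n) (⟨n - 2, by omega⟩ : Fin n)) := by
  rw [blocks_eq x, blocks_eq y] at hcard
  obtain ⟨m, hm, hmin0⟩ :=
    Set.exists_min_image {c | y.r p c} id (Set.toFinite _) ⟨p, y.refl' p⟩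
  have hm' : y.r p m := hm
  have hminm : ∀ c, y.r m c → m ≤ c := fun c h => hmin0 c (y.trans' hm' h)
  have hDne : ({c | y.r m c ∧ ¬ x.r m c} : Set (Fin n)).Nonempty := by
    by_cases hmp : x.r m p
    · exact ⟨q, y.trans' (y.symm' hm') hpq, fun hq => hnpq (x.trans' (x.symm' hmp) hq)⟩
    · exact ⟨p, y.symm' hm', hmp⟩
  obtain ⟨b, hb, hbmin0⟩ :=
    Set.exists_min_image {c | y.r m c ∧ ¬ x.r m c} id (Set.toFinite _) hDne
  have hb1 : y.r m b := hb.1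
  have hb2 : ¬ x.r m b := hb.2
  have hbmin : ∀ c, y.r m c → ¬ x.r m c → b ≤ c := fun c h h' => hbmin0 c ⟨h, h'⟩
  have znc : IsNoncrossing (mrg x m b) :=
    nc_minmerge hxPE.1 hyPE.1 hxy hb1 hb2 hminm hbmin
  have hxz : x < mrg x m b := lt_mrg hb2
  have hzy : mrg x m b ≤ y := mrg_le hxy hb1
  have hzylt : mrg x m b < y := by
    refine lt_of_le_of_ne hzy fun h => ?_
    have := ncard_mrg hb2
    rw [h] at this
    omega
  have hnoL1 := mrg_not_L1 hn hxy hb1 hb2 hminm hxPE.2.1 hyPE.2.1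
  by_cases hbad : IsBlock (mrg x m b) {a : Fin n | a.val = n - 1} ∧
      ∃ a c : Fin n, a.val = 0 ∧ c.val = n - 2 ∧ (mrg x m b).r a c
  · right
    obtain ⟨hsing, hmz⟩ := mrg_L2_analysis hn hxy hb1 hb2 hminm hxPE.2.2 hbad
    refine ⟨hsing, y.trans' hm' hmz, ?_⟩
    obtain ⟨-, a, c, ha0, hc2, hac⟩ := hbad
    have ha' : a = (⟨0, by omega⟩ : Fin n) := Fin.ext ha0
    have hc' : c = (⟨n - 2, by omega⟩ : Fin n) := Fin.ext hc2
    rw [← ha', ← hc']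
    exact hzy hac
  · left
    exact ⟨mrg x m b, ⟨znc, hnoL1, hbad⟩, hxz, hzylt⟩

lemma exists_between (hn : 3 ≤ n) {x y : Setoid (Fin n)}
    (hxPE : PEmem x) (hyPE : PEmem y) (hlt : x < y)
    (hcard : {B : Set (Fin n) | IsBlock y B}.ncard + 2 ≤
      {B : Set (Fin n) | IsBlock x B}.ncard) :
    ∃ z, PEmem z ∧ x < z ∧ z < y := by
  obtain ⟨p, q, hpq, hnpq⟩ := strict_exists hlt
  rcases minmerge_package hn hxPE hyPE hlt.le hcard hpq hnpq with h | ⟨hsing, hpz, hzn⟩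
  · exact h
  have hyL2 : ¬ IsBlock y {a : Fin n | a.val = n - 1} := fun hB =>
    hyPE.2.2 ⟨hB, ⟨0, by omega⟩, ⟨n - 2, by omega⟩, rfl, rfl, hzn⟩
  have hex : ∃ c, y.r (⟨n - 1, by omega⟩ : Fin n) c ∧ c ≠ ⟨n - 1, by omega⟩ := by
    by_contra hc
    push_neg at hc
    apply hyL2
    refine ⟨⟨n - 1, by omega⟩, ?_⟩
    rw [Sw_eq hn]
    ext d
    constructor
    · rintro rfl
      exact y.refl' _
    · intro hd
      exact hc d hd
  obtain ⟨c, hwc, hcw⟩ := hex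
  by_cases hwz : y.r (⟨n - 1, by omega⟩ : Fin n) ⟨0, by omega⟩
  · -- top merge of the class of 0 with the singleton {n-1}
    have hzw : ¬ x.r (⟨0, by omega⟩ : Fin n) ⟨n - 1, by omega⟩ := by
      intro h
      have h1 := hsing _ (x.symm' h)
      have h2 : (0 : ℕ) = n - 1 := congrArg Fin.val h1
      omega
    set z := mrg x (⟨0, by omega⟩ : Fin n) (⟨n - 1, by omega⟩ : Fin n) with hzdef
    have znc : IsNoncrossing z :=
      nc_topmerge hxPE.1 (fun c => by exact Nat.zero_le c.val)
        (fun c => by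
          have : c.val ≤ n - 1 := by omega
          exact this) hsing
    have hxz : x < z := lt_mrg hzw
    have hzy : z ≤ y := mrg_le hlt.le (y.symm' hwz)
    have hzylt : z < y := by
      refine lt_of_le_of_ne hzy fun h => ?_
      have h2 := ncard_mrg hzw
      rw [blocks_eq x, blocks_eq y] at hcard
      rw [← hzdef, h] at h2
      omega
    refine ⟨z, ⟨znc, ?_, ?_⟩, hxz, hzylt⟩
    · rintro ⟨r, hr⟩
      have hr' : {a : Fin n | a.val = n - 2 ∨ a.val = n - 1} = cls z r := hr
      rcases cls_mrg x (⟨0, by omega⟩ : Fin n) (⟨n - 1, by omega⟩ : Fin n) r with hcl | hcl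
      · exact hxPE.2.1 ⟨r, hr'.trans (by rw [← hzdef] at hcl; exact hcl)⟩
      · have hmem : (⟨0, by omega⟩ : Fin n) ∈ {a : Fin n | a.val = n - 2 ∨ a.val = n - 1} := by
          rw [hr', hzdef, hcl]
          exact Or.inl (x.refl' _)
        have : (0 : ℕ) = n - 2 ∨ (0 : ℕ) = n - 1 := hmem
        omega
    · rintro ⟨⟨r, hr⟩, -⟩
      have hr' : ({⟨n - 1, by omega⟩} : Set (Fin n)) = cls z r := by
        rw [← Sw_eq hn]; exact hr
      have hrw : r = (⟨n - 1, by omega⟩ : Fin n) := by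
        have : r ∈ cls z r := z.refl' r
        rw [← hr'] at this
        exact this
      subst hrw
      have hmem : (⟨0, by omega⟩ : Fin n) ∈ cls z (⟨n - 1, by omega⟩ : Fin n) :=
        Or.inr (Or.inr ⟨x.refl' _, x.refl' _⟩)
      rw [← hr'] at hmem
      have : (0 : ℕ) = n - 1 := congrArg Fin.val hmem
      omega
  · have hnwc : ¬ x.r (⟨n - 1, by omega⟩ : Fin n) c := fun h => hcw (hsing c h)
    rcases minmerge_package hn hxPE hyPE hlt.le hcard hwc hnwc with h | ⟨-, hwzer, -⟩
    · exact h
    · exact absurd hwzer hwz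

end PEaux

end PEauxiliary

/-- For `n ≥ 3`, the lattice `(PE_n, ≤_dref)` is graded: in a cover
relation `x ⋖ y` of `PE_n`, the number of blocks of `x` exceeds that of `y` by one. -/
theorem PE_graded (n : ℕ) (hn : 3 ≤ n) (x y : Setoid (Fin n)) (h : CovPE x y) :
    {B : Set (Fin n) | IsBlock x B}.ncard = {B : Set (Fin n) | IsBlock y B}.ncard + 1 := by
  obtain ⟨hxPE, hyPE, hlt, hcov⟩ := h
  obtain ⟨p, q, hpq, hnpq⟩ := PEaux.strict_exists hlt
  have h1 : {B : Set (Fin n) | IsBlock y B}.ncard < {B : Set (Fin n) | IsBlock x B}.ncard := by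
    rw [PEaux.blocks_eq, PEaux.blocks_eq]
    exact PEaux.ncard_blocks_lt hlt.le hpq hnpq
  have h2 : ¬ ({B : Set (Fin n) | IsBlock y B}.ncard + 2 ≤
      {B : Set (Fin n) | IsBlock x B}.ncard) := by
    intro hc
    obtain ⟨z, hzPE, hxz, hzy⟩ := PEaux.exists_between hn hxPE hyPE hlt hc
    exact hcov z hzPE hxz hzy
  omega
end
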